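/- If R is strictly monotone on (a,b), then the evolute γ̃ is a C¹-regular curve: R is a homeomorphism of (a,b) onto an interval, the reparametrization γ̃₁(s̃) := γ̃(R⁻¹(s̃)) is continuously differentiable with γ̃₁'(s̃) = ν(R⁻¹(s̃)), which is a nowhere-vanishing unit vector, so γ̃₁ is an arclength parametrization of the evolute of class C¹. -/

import Mathlib

open Set Real Topology Filter
open scoped NNReal

noncomputable section

/-- The Euclidean plane. -/
abbrev Plane := EuclideanSpace ℝ (Fin 2)

/-- Rotation of a plane vector by `+π/2`. -/
def Jrot (v : Plane) : Plane := WithLp.toLp 2 ![-(v 1), v 0]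

local notation "⟪" x ", " y "⟫" => @inner ℝ _ _ x y

lemma inner_plane (x y : Plane) : ⟪x, y⟫ = x 0 * y 0 + x 1 * y 1 := by
  simp [PiLp.inner_apply, Fin.sum_univ_two, RCLike.inner_apply, mul_comm]

lemma Jrot_Jrot (v : Plane) : Jrot (Jrot v) = -v := by
  ext i; fin_cases i <;> simp [Jrot]

lemma norm_Jrot (v : Plane) : ‖Jrot v‖ = ‖v‖ := by
  rw [EuclideanSpace.norm_eq, EuclideanSpace.norm_eq]
  simp [Fin.sum_univ_two, Jrot]; ring_nf

def Jmap : Plane →L[ℝ] Plane := LinearMap.toContinuousLinearMap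
  { toFun := Jrot
    map_add' := by intro x y; ext i; fin_cases i <;> simp [Jrot] <;> ring
    map_smul' := by intro c x; ext i; fin_cases i <;> simp [Jrot] <;> ring }

lemma Jmap_apply (v : Plane) : Jmap v = Jrot v := rfl

lemma plane_decomp (u w : Plane) (hu : ‖u‖ = 1) :
    w = ⟪w, u⟫ • u + ⟪w, Jrot u⟫ • Jrot u := by
  have h : u 0 ^ 2 + u 1 ^ 2 = 1 := by
    have := congrArg (· ^ 2) hu
    rw [EuclideanSpace.norm_eq] at this
    simp [Fin.sum_univ_two, Real.sq_sqrt, add_nonneg, sq_nonneg] at this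
    linarith [this]
  ext i; fin_cases i
  · simp [inner_plane, Jrot, PiLp.add_apply, PiLp.smul_apply, smul_eq_mul]
    linear_combination (-(w 0)) * h
  · simp [inner_plane, Jrot, PiLp.add_apply, PiLp.smul_apply, smul_eq_mul]
    linear_combination (-(w 1)) * h

/-- IVT: the image of `Ioo a b` under a continuous strictly monotone map is a
neighborhood of each of its points. -/
lemma image_mem_nhds_aux {f : ℝ → ℝ} {a b : ℝ} (hf : ContinuousOn f (Ioo a b))
    (hm : StrictMonoOn f (Ioo a b)) {x : ℝ} (hx : x ∈ Ioo a b) :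
    f '' Ioo a b ∈ 𝓝 (f x) := by
  set s₁ := (a + x) / 2 with hs₁def
  set s₂ := (x + b) / 2 with hs₂def
  have hs₁ : a < s₁ ∧ s₁ < x := by constructor <;> · simp only [hs₁def]; linarith [hx.1]
  have hs₂ : x < s₂ ∧ s₂ < b := by constructor <;> · simp only [hs₂def]; linarith [hx.2]
  have h₁I : s₁ ∈ Ioo a b := ⟨hs₁.1, hs₁.2.trans hx.2⟩
  have h₂I : s₂ ∈ Ioo a b := ⟨hx.1.trans hs₂.1, hs₂.2⟩
  have hsub : Icc s₁ s₂ ⊆ Ioo a b := fun u hu =>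
    ⟨lt_of_lt_of_le hs₁.1 hu.1, lt_of_le_of_lt hu.2 hs₂.2⟩
  have hIoo : Ioo s₁ s₂ ⊆ Ioo a b := fun u hu =>
    ⟨hs₁.1.trans hu.1, hu.2.trans hs₂.2⟩
  have h1 : Ioo (f s₁) (f s₂) ⊆ f '' Ioo s₁ s₂ :=
    intermediate_value_Ioo (le_of_lt (hs₁.2.trans hs₂.1)) (hf.mono hsub)
  refine mem_of_superset (Ioo_mem_nhds ?_ ?_) (h1.trans (image_mono hIoo))
  · exact hm h₁I hx hs₁.2
  · exact hm hx h₂I hs₂.1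

/-- Continuity of the inverse of a continuous strictly monotone map on `Ioo a b`. -/
lemma continuousOn_invFunOn_aux {f : ℝ → ℝ} {a b : ℝ} (hf : ContinuousOn f (Ioo a b))
    (hm : StrictMonoOn f (Ioo a b)) :
    ContinuousOn (Function.invFunOn f (Ioo a b)) (f '' Ioo a b) := by
  set ψ := Function.invFunOn f (Ioo a b) with hψdef
  have hinj : InjOn f (Ioo a b) := hm.injOn
  have hleft : ∀ s ∈ Ioo a b, ψ (f s) = s := fun s hs => hinj.leftInvOn_invFunOn hs
  intro t ht
  obtain ⟨x, hxI, hxt⟩ := ht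
  have hψt : ψ t = x := by rw [← hxt]; exact hleft x hxI
  have hψmono : StrictMonoOn ψ (f '' Ioo a b) := by
    rintro _ ⟨u, huI, rfl⟩ _ ⟨v, hvI, rfl⟩ huv
    rw [hleft u huI, hleft v hvI]
    by_contra h
    exact absurd huv (not_lt.2 (hm.monotoneOn hvI huI (not_lt.1 h)))
  have himg : ψ '' (f '' Ioo a b) = Ioo a b := by
    apply Subset.antisymm
    · rintro _ ⟨_, ⟨u, huI, rfl⟩, rfl⟩; rw [hleft u huI]; exact huI
    · intro u huI; exact ⟨f u, mem_image_of_mem f huI, hleft u huI⟩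
  have hnb : f '' Ioo a b ∈ 𝓝 t := by rw [← hxt]; exact image_mem_nhds_aux hf hm hxI
  have hnb2 : ψ '' (f '' Ioo a b) ∈ 𝓝 (ψ t) := by
    rw [himg, hψt]; exact isOpen_Ioo.mem_nhds hxI
  exact (hψmono.continuousAt_of_image_mem_nhds hnb hnb2).continuousWithinAt


/-- if `R` is strictly monotone then the evolute is `C¹`-regular:
`R` is a homeomorphism onto an interval and the reparametrization `ev ∘ R⁻¹` is
continuously differentiable with unit (hence nonvanishing) derivative `ν ∘ R⁻¹`,
i.e. it is a `C¹` arclength parametrization of the evolute. -/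
theorem evolute_C1_regular_of_strictMono
    (a b : ℝ) (hab : a < b) (γ ν ev : ℝ → Plane) (κ R : ℝ → ℝ)
    (hγ : ContDiffOn ℝ 2 γ (Ioo a b))
    (harc : ∀ s ∈ Ioo a b, ‖deriv γ s‖ = 1)
    (hν : ∀ s, ν s = Jrot (deriv γ s))
    (hκdef : ∀ s, κ s = ⟪deriv (deriv γ) s, ν s⟫)
    (hκ : ∀ s ∈ Ioo a b, κ s ≠ 0)
    (hR : ∀ s, R s = (κ s)⁻¹)
    (hev : ∀ s, ev s = γ s + R s • ν s)
    (hmono : StrictMonoOn R (Ioo a b) ∨ StrictAntiOn R (Ioo a b)) :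
    ContinuousOn R (Ioo a b) ∧ InjOn R (Ioo a b) ∧ (R '' Ioo a b).OrdConnected ∧
    ∃ ψ : ℝ → ℝ, ContinuousOn ψ (R '' Ioo a b) ∧ (∀ s ∈ Ioo a b, ψ (R s) = s) ∧
      (∀ t ∈ R '' Ioo a b, HasDerivAt (fun u => ev (ψ u)) (ν (ψ t)) t) ∧
      ContinuousOn (fun t => ν (ψ t)) (R '' Ioo a b) ∧
      ∀ t ∈ R '' Ioo a b, ‖ν (ψ t)‖ = 1 := by
  have hIo : IsOpen (Ioo a b) := isOpen_Ioo
  -- basic calculus facts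
  have hC1 : ContDiffOn ℝ 1 (deriv γ) (Ioo a b) :=
    hγ.deriv_of_isOpen (m := 1) hIo (by norm_num)
  have hd1 : ∀ s ∈ Ioo a b, HasDerivAt γ (deriv γ s) s := fun s hs =>
    ((hγ.differentiableOn (by norm_num)).differentiableAt (hIo.mem_nhds hs)).hasDerivAt
  have hd2 : ∀ s ∈ Ioo a b, HasDerivAt (deriv γ) (deriv (deriv γ) s) s := fun s hs =>
    ((hC1.differentiableOn (by norm_num)).differentiableAt (hIo.mem_nhds hs)).hasDerivAt
  have cont1 : ContinuousOn (deriv γ) (Ioo a b) := hC1.continuousOn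
  have cont2 : ContinuousOn (deriv (deriv γ)) (Ioo a b) :=
    (hC1.deriv_of_isOpen (m := 0) hIo (by norm_num)).continuousOn
  have hνfun : ν = fun u => Jmap (deriv γ u) := funext fun u => (hν u).trans rfl
  -- the second derivative is κ • ν
  have hdecomp : ∀ s ∈ Ioo a b, deriv (deriv γ) s = κ s • ν s := by
    intro s hs
    have horth : ⟪deriv (deriv γ) s, deriv γ s⟫ = 0 := by
      have hone : (fun u => ⟪deriv γ u, deriv γ u⟫) =ᶠ[𝓝 s] fun _ => (1 : ℝ) := by
        filter_upwards [hIo.mem_nhds hs] with u hu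
        rw [real_inner_self_eq_norm_sq, harc u hu]; norm_num
      have hder : HasDerivAt (fun u => ⟪deriv γ u, deriv γ u⟫)
          (⟪deriv γ s, deriv (deriv γ) s⟫ + ⟪deriv (deriv γ) s, deriv γ s⟫) s :=
        (hd2 s hs).inner ℝ (hd2 s hs)
      have h0 : HasDerivAt (fun u => ⟪deriv γ u, deriv γ u⟫) 0 s :=
        (hasDerivAt_const s (1 : ℝ)).congr_of_eventuallyEq hone
      have huniq := h0.unique hder
      have hcomm : ⟪deriv γ s, deriv (deriv γ) s⟫ = ⟪deriv (deriv γ) s, deriv γ s⟫ :=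
        real_inner_comm _ _
      linarith [huniq, hcomm]
    have := plane_decomp (deriv γ s) (deriv (deriv γ) s) (harc s hs)
    rw [← hν s, horth, zero_smul, zero_add, ← hκdef s] at this
    exact this
  -- derivative of ν
  have hνd : ∀ s ∈ Ioo a b, HasDerivAt ν (-(κ s) • deriv γ s) s := by
    intro s hs
    have h1 : HasDerivAt (fun u => Jmap (deriv γ u)) (Jmap (deriv (deriv γ) s)) s :=
      Jmap.hasFDerivAt.comp_hasDerivAt s (hd2 s hs)
    have h2 : Jmap (deriv (deriv γ) s) = -(κ s) • deriv γ s := by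
      rw [hdecomp s hs, map_smul, Jmap_apply, hν s, Jrot_Jrot, smul_neg, neg_smul]
    rw [hνfun, ← h2]; exact h1
  have hνn : ∀ s ∈ Ioo a b, ‖ν s‖ = 1 := fun s hs => by
    rw [hν s, norm_Jrot]; exact harc s hs
  have hνcont : ContinuousOn ν (Ioo a b) := by
    rw [hνfun]; exact Jmap.continuous.comp_continuousOn cont1
  have hκcont : ContinuousOn κ (Ioo a b) := by
    have : κ = fun s => ⟪deriv (deriv γ) s, ν s⟫ := funext hκdef
    rw [this]; exact cont2.inner hνcont
  have hRcont : ContinuousOn R (Ioo a b) := by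
    have : R = fun s => (κ s)⁻¹ := funext hR
    rw [this]; exact hκcont.inv₀ hκ
  have hκR : ∀ s ∈ Ioo a b, κ s * R s = 1 := fun s hs => by
    rw [hR s]; exact mul_inv_cancel₀ (hκ s hs)
  have hinj : InjOn R (Ioo a b) := by
    rcases hmono with h | h
    · exact h.injOn
    · exact h.injOn
  refine ⟨hRcont, hinj, ((isPreconnected_Ioo.image R hRcont).ordConnected), ?_⟩
  -- unify the monotone and antitone cases
  obtain ⟨ε, hε, hgmono⟩ : ∃ ε : ℝ, (ε = 1 ∨ ε = -1) ∧
      StrictMonoOn (fun s => ε * R s) (Ioo a b) := by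
    rcases hmono with h | h
    · exact ⟨1, Or.inl rfl, fun x hx y hy hxy => by simpa using h hx hy hxy⟩
    · exact ⟨-1, Or.inr rfl, fun x hx y hy hxy => by simpa using h hx hy hxy⟩
  set g : ℝ → ℝ := fun s => ε * R s with hgdef
  have hε2 : ε * ε = 1 := by rcases hε with h | h <;> rw [h] <;> norm_num
  have hεabs : |ε| = 1 := by rcases hε with h | h <;> rw [h] <;> norm_num
  have hgR : ∀ s, g s = ε * R s := fun s => rfl
  have hRg : ∀ s, R s = ε * g s := fun s => by
    rw [hgR s, ← mul_assoc, hε2, one_mul]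
  have hgcont : ContinuousOn g (Ioo a b) := continuousOn_const.mul hRcont
  set ψ : ℝ → ℝ := fun t => Function.invFunOn g (Ioo a b) (ε * t) with hψdef
  have hginj : InjOn g (Ioo a b) := hgmono.injOn
  have hψg : ∀ s ∈ Ioo a b, ψ (R s) = s := by
    intro s hs
    have h1 : ψ (R s) = Function.invFunOn g (Ioo a b) (g s) := by
      rw [hψdef]
    rw [h1]
    exact hginj.leftInvOn_invFunOn hs
  have hψmem : ∀ t ∈ R '' Ioo a b, ψ t ∈ Ioo a b ∧ R (ψ t) = t := by
    rintro _ ⟨s, hs, rfl⟩; rw [hψg s hs]; exact ⟨hs, rfl⟩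
  have himgU : R '' Ioo a b = (fun t => ε * t) ⁻¹' (g '' Ioo a b) := by
    ext t
    simp only [mem_preimage, mem_image]
    constructor
    · rintro ⟨s, hs, rfl⟩; exact ⟨s, hs, (hgR s).symm⟩
    · rintro ⟨s, hs, h⟩
      exact ⟨s, hs, by rw [hRg s, h, ← mul_assoc, hε2, one_mul]⟩
  have hUnhds : ∀ t ∈ R '' Ioo a b, R '' Ioo a b ∈ 𝓝 t := by
    intro t ht
    obtain ⟨hmem, hRt⟩ := hψmem t ht
    have h1 : g '' Ioo a b ∈ 𝓝 (ε * t) := by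
      have := image_mem_nhds_aux hgcont hgmono hmem
      rwa [hgR (ψ t), hRt] at this
    rw [himgU]
    exact ContinuousAt.preimage_mem_nhds
      ((continuous_const.mul continuous_id).continuousAt) h1
  have hψcont' : ContinuousOn ψ (R '' Ioo a b) := by
    have h1 := continuousOn_invFunOn_aux hgcont hgmono
    have h2 : ContinuousOn ((Function.invFunOn g (Ioo a b)) ∘ (fun t => ε * t))
        (R '' Ioo a b) := by
      refine h1.comp ((continuous_const.mul continuous_id).continuousOn) ?_
      rintro _ ⟨s, hs, rfl⟩
      exact ⟨s, hs, (hgR s).symm⟩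
    exact h2
  have hRbound : ∀ s₀ s u, s₀ ∈ Ioo a b → s ∈ Ioo a b → u ∈ Ioo a b → u ∈ uIcc s₀ s →
      |R u - R s₀| ≤ |R s - R s₀| := by
    intro s₀ s u h₀ hs hu huI
    have habs : ∀ x y : ℝ, |R x - R y| = |g x - g y| := by
      intro x y; rw [hRg x, hRg y, ← mul_sub, abs_mul, hεabs, one_mul]
    rw [habs u s₀, habs s s₀]
    rcases le_total s₀ s with h | h
    · rw [uIcc_of_le h] at huI
      have h1 := hgmono.monotoneOn h₀ hu huI.1
      have h2 := hgmono.monotoneOn hu hs huI.2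
      rw [abs_of_nonneg (by linarith), abs_of_nonneg (by linarith)]; linarith
    · rw [uIcc_of_ge h] at huI
      have h1 := hgmono.monotoneOn hs hu huI.1
      have h2 := hgmono.monotoneOn hu h₀ huI.2
      rw [abs_of_nonpos (by linarith), abs_of_nonpos (by linarith)]; linarith
  have hkey : ∀ t₀ ∈ R '' Ioo a b, HasDerivAt (fun u => ev (ψ u)) (ν (ψ t₀)) t₀ := by
    intro t₀ ht₀
    obtain ⟨hs₀I, hRψ⟩ := hψmem t₀ ht₀
    set s₀ := ψ t₀ with hs₀def
    set s₁ := (a + s₀) / 2 with hs₁def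
    set s₂ := (s₀ + b) / 2 with hs₂def
    have hs₁ : a < s₁ ∧ s₁ < s₀ := by
      constructor <;> · simp only [hs₁def]; linarith [hs₀I.1]
    have hs₂ : s₀ < s₂ ∧ s₂ < b := by
      constructor <;> · simp only [hs₂def]; linarith [hs₀I.2]
    have hsub : Icc s₁ s₂ ⊆ Ioo a b := fun u hu =>
      ⟨lt_of_lt_of_le hs₁.1 hu.1, lt_of_le_of_lt hu.2 hs₂.2⟩
    obtain ⟨C, hC⟩ := (isCompact_Icc (a := s₁) (b := s₂)).exists_bound_of_continuousOn
      (hκcont.mono hsub)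
    set gg : ℝ → Plane := fun u => γ u + R s₀ • ν u with hggdef
    have hggd : ∀ u ∈ Ioo a b, HasDerivAt gg ((κ u * (R u - R s₀)) • deriv γ u) u := by
      intro u hu
      have h := (hd1 u hu).add ((hνd u hu).const_smul (R s₀))
      have h1 : (κ u * (R u - R s₀)) • deriv γ u
          = deriv γ u + R s₀ • (-(κ u) • deriv γ u) := by
        rw [smul_smul]
        have h2 : κ u * (R u - R s₀) = 1 + R s₀ * -(κ u) := by
          linear_combination hκR u hu
        rw [h2, add_smul, one_smul]
      rw [hggdef]; simp only
      rw [h1]; exact h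
    refine HasDerivWithinAt.hasDerivAt ?_ (hUnhds t₀ ht₀)
    rw [hasDerivWithinAt_iff_tendsto_slope]
    set l := 𝓝[(R '' Ioo a b) \ {t₀}] t₀ with hldef
    have hψtend : Tendsto ψ l (𝓝[Ioo a b] s₀) := by
      have h1 : ContinuousWithinAt ψ (R '' Ioo a b) t₀ := hψcont' t₀ ht₀
      exact (h1.tendsto_nhdsWithin (fun t ht => (hψmem t ht).1)).mono_left
        (nhdsWithin_mono _ diff_subset)
    have hψtend' : Tendsto ψ l (𝓝 s₀) := hψtend.mono_right nhdsWithin_le_nhds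
    have hνlim : Tendsto (fun t => ν (ψ t)) l (𝓝 (ν s₀)) :=
      (hνcont s₀ hs₀I).tendsto.comp hψtend
    have hE : ∀ᶠ t in l, ψ t ∈ Ioo s₁ s₂ :=
      hψtend'.eventually (isOpen_Ioo.eventually_mem ⟨hs₁.2, hs₂.1⟩)
    have hmemE : ∀ᶠ t in l, t ∈ (R '' Ioo a b) \ {t₀} := eventually_mem_nhdsWithin
    have hslope : ∀ᶠ t in l, slope (fun u => ev (ψ u)) t₀ t
        = (t - t₀)⁻¹ • (gg (ψ t) - gg s₀) + ν (ψ t) := by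
      filter_upwards [hmemE] with t ht
      have htne : t - t₀ ≠ 0 := sub_ne_zero.2 ht.2
      obtain ⟨hψtI, hRt⟩ := hψmem t ht.1
      simp only [slope_def_module]
      have hdiff : ev (ψ t) - ev (ψ t₀) = (gg (ψ t) - gg s₀) + (t - t₀) • ν (ψ t) := by
        have hts : t - t₀ = R (ψ t) - R s₀ := by rw [hRt, hRψ]
        simp only [← hs₀def, hggdef, hev]
        rw [hts]
        module
      rw [hdiff, smul_add, smul_smul, inv_mul_cancel₀ htne, one_smul]
    rw [tendsto_congr' hslope]
    have hC0 : (0:ℝ) ≤ C := by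
      have := hC s₀ ⟨le_of_lt hs₁.2, le_of_lt hs₂.1⟩
      rw [Real.norm_eq_abs] at this
      exact (abs_nonneg _).trans this
    have h0 : Tendsto (fun t => (t - t₀)⁻¹ • (gg (ψ t) - gg s₀)) l (𝓝 0) := by
      have hb : ∀ᶠ t in l, ‖(t - t₀)⁻¹ • (gg (ψ t) - gg s₀)‖ ≤ C * |ψ t - s₀| := by
        filter_upwards [hmemE, hE] with t ht hmem
        have htne : t - t₀ ≠ 0 := sub_ne_zero.2 ht.2
        obtain ⟨hψtI, hRt⟩ := hψmem t ht.1
        have hDsub : uIcc s₀ (ψ t) ⊆ Icc s₁ s₂ :=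
          uIcc_subset_Icc ⟨le_of_lt hs₁.2, le_of_lt hs₂.1⟩
            ⟨le_of_lt hmem.1, le_of_lt hmem.2⟩
        have hb1 : ‖gg (ψ t) - gg s₀‖ ≤ (C * |t - t₀|) * ‖ψ t - s₀‖ := by
          refine Convex.norm_image_sub_le_of_norm_hasDerivWithin_le
            (f' := fun u => (κ u * (R u - R s₀)) • deriv γ u)
            (fun u hu => (hggd u (hsub (hDsub hu))).hasDerivWithinAt) ?_
            (convex_uIcc _ _) left_mem_uIcc right_mem_uIcc
          intro u hu
          have huI := hsub (hDsub hu)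
          rw [norm_smul, harc u huI, mul_one, Real.norm_eq_abs, abs_mul]
          have h1 : |κ u| ≤ C := by
            have := hC u (hDsub hu); rwa [Real.norm_eq_abs] at this
          have h2 : |R u - R s₀| ≤ |t - t₀| := by
            rw [← hRt, ← hRψ]
            exact hRbound s₀ (ψ t) u hs₀I hψtI huI hu
          exact mul_le_mul h1 h2 (abs_nonneg _) hC0
        have habsne : |t - t₀| ≠ 0 := abs_ne_zero.2 htne
        calc ‖(t - t₀)⁻¹ • (gg (ψ t) - gg s₀)‖
            = |t - t₀|⁻¹ * ‖gg (ψ t) - gg s₀‖ := by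
              rw [norm_smul, Real.norm_eq_abs, abs_inv]
          _ ≤ |t - t₀|⁻¹ * ((C * |t - t₀|) * ‖ψ t - s₀‖) :=
              mul_le_mul_of_nonneg_left hb1 (by positivity)
          _ = C * |ψ t - s₀| := by
              rw [Real.norm_eq_abs]
              field_simp
      refine squeeze_zero_norm' hb ?_
      have h1 : Tendsto (fun t => ψ t - s₀) l (𝓝 0) := by
        have := hψtend'.sub_const s₀; rwa [sub_self] at this
      have h2 : Tendsto (fun t => C * |ψ t - s₀|) l (𝓝 (C * |0|)) := h1.abs.const_mul C
      simpa using h2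
    have hfin := h0.add hνlim
    simpa using hfin
  exact ⟨ψ, hψcont', hψg, hkey,
    hνcont.comp hψcont' (fun t ht => (hψmem t ht).1),
    fun t ht => hνn _ (hψmem t ht).1⟩
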